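/- The tridiagonal antisymmetric matrix determinant D_n(λ) = det(B_n + 2λI_n), where B_n is the n×n antisymmetric matrix with entries β_{k,k+1} = √(2k) = -β_{k+1,k} and β_{j,k} = 0 for |j-k| ≠ 1, equals ∑_{m=0}^{⌊n/2⌋} 2^{n-m} (n choose 2m) (2m)!/(2^m m!) λ^{n-2m}. -/

import Mathlib

noncomputable def gEnt (j k : ℕ) (lam : ℝ) : ℝ :=
  if k = j + 1 then Real.sqrt (2 * (j + 1))
  else if j = k + 1 then -Real.sqrt (2 * (k + 1))
  else if j = k then 2 * lam else 0

noncomputable def Amat (n : ℕ) (lam : ℝ) : Matrix (Fin n) (Fin n) ℝ :=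
  Matrix.of fun j k => gEnt (j : ℕ) (k : ℕ) lam

lemma gEnt_eq_zero {j k : ℕ} (h1 : k ≠ j + 1) (h2 : j ≠ k + 1) (h3 : j ≠ k) (lam : ℝ) :
    gEnt j k lam = 0 := by simp [gEnt, h1, h2, h3]

lemma Amat_rec (n : ℕ) (lam : ℝ) :
    (Amat (n + 2) lam).det =
      2 * lam * (Amat (n + 1) lam).det + 2 * (n + 1) * (Amat n lam).det := by
  have hsub1 : (Amat (n+2) lam).submatrix (Fin.last (n+1)).succAbove
      (Fin.last (n+1)).succAbove = Amat (n+1) lam := by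
    ext i j
    simp [Amat, Matrix.submatrix_apply, Fin.succAbove_last]
  set jn : Fin (n+2) := (Fin.last n).castSucc with hjn
  have hjnval : (jn : ℕ) = n := rfl
  -- value of succAbove jn at various points
  have hq_last : jn.succAbove (Fin.last n) = Fin.last (n+1) := by
    rw [Fin.succAbove_of_le_castSucc _ _ (le_refl _)]
    rfl
  have hq_cast : ∀ k : Fin n, jn.succAbove k.castSucc = k.castSucc.castSucc := by
    intro k
    rw [Fin.succAbove_of_castSucc_lt]
    exact_mod_cast k.isLt
  -- the minor M' obtained by deleting last row and column jn
  set M' : Matrix (Fin (n+1)) (Fin (n+1)) ℝ :=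
    (Amat (n+2) lam).submatrix (Fin.last (n+1)).succAbove jn.succAbove with hM'
  have hM'det : M'.det = Real.sqrt (2 * (n+1)) * (Amat n lam).det := by
    rw [Matrix.det_succ_column M' (Fin.last n), Fin.sum_univ_castSucc]
    have h0 : ∀ i : Fin n, (-1:ℝ) ^ ((i.castSucc : ℕ) + (Fin.last n : ℕ)) *
        M' i.castSucc (Fin.last n) *
        (M'.submatrix i.castSucc.succAbove (Fin.last n).succAbove).det = 0 := by
      intro i
      have : M' i.castSucc (Fin.last n) = 0 := by
        have hi : (i : ℕ) < n := i.isLt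
        simp only [hM', Matrix.submatrix_apply, Fin.succAbove_last, hq_last]
        show gEnt ((i.castSucc.castSucc : Fin (n+2)) : ℕ) ((Fin.last (n+1) : Fin (n+2)) : ℕ) lam = 0
        simp only [Fin.coe_castSucc, Fin.val_last]
        exact gEnt_eq_zero (by omega) (by omega) (by omega) lam
      rw [this]; ring
    rw [Finset.sum_congr rfl (fun i _ => h0 i), Finset.sum_const_zero, zero_add]
    have hent : M' (Fin.last n) (Fin.last n) = Real.sqrt (2 * (n+1)) := by
      simp only [hM', Matrix.submatrix_apply, Fin.succAbove_last, hq_last]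
      show gEnt (((Fin.last n).castSucc : Fin (n+2)) : ℕ) ((Fin.last (n+1) : Fin (n+2)) : ℕ) lam
        = Real.sqrt (2 * (n+1))
      simp only [Fin.coe_castSucc, Fin.val_last]
      simp [gEnt]
    have hsub2 : M'.submatrix (Fin.last n).succAbove (Fin.last n).succAbove = Amat n lam := by
      ext i j
      simp only [hM', Matrix.submatrix_apply, Fin.succAbove_last, hq_cast]
      rfl
    rw [hent, hsub2]
    have hs : ((Fin.last n : ℕ) + (Fin.last n : ℕ)) = 2*n := by simp [Fin.val_last]; ring
    rw [hs, pow_mul]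
    norm_num
  rw [Matrix.det_succ_row (Amat (n+2) lam) (Fin.last (n+1)),
    Fin.sum_univ_castSucc, Fin.sum_univ_castSucc]
  have h0 : ∀ j : Fin n, (-1:ℝ) ^ ((Fin.last (n+1) : ℕ) + ((j.castSucc.castSucc : Fin (n+2)) : ℕ)) *
      (Amat (n+2) lam) (Fin.last (n+1)) j.castSucc.castSucc *
      ((Amat (n+2) lam).submatrix (Fin.last (n+1)).succAbove j.castSucc.castSucc.succAbove).det
      = 0 := by
    intro j
    have hj : (j : ℕ) < n := j.isLt
    have : (Amat (n+2) lam) (Fin.last (n+1)) j.castSucc.castSucc = 0 := by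
      show gEnt ((Fin.last (n+1) : Fin (n+2)) : ℕ) ((j.castSucc.castSucc : Fin (n+2)) : ℕ) lam = 0
      simp only [Fin.coe_castSucc, Fin.val_last]
      exact gEnt_eq_zero (by omega) (by omega) (by omega) lam
    rw [this]; ring
  rw [Finset.sum_congr rfl (fun j _ => h0 j), Finset.sum_const_zero, zero_add]
  have hentn : (Amat (n+2) lam) (Fin.last (n+1)) ((Fin.last n).castSucc : Fin (n+2)) =
      -Real.sqrt (2 * (n+1)) := by
    show gEnt ((Fin.last (n+1) : Fin (n+2)) : ℕ) (((Fin.last n).castSucc : Fin (n+2)) : ℕ) lam = _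
    simp only [Fin.coe_castSucc, Fin.val_last]
    unfold gEnt
    rw [if_neg (by omega), if_pos (by omega)]
  have hentd : (Amat (n+2) lam) (Fin.last (n+1)) (Fin.last (n+1)) = 2 * lam := by
    show gEnt ((Fin.last (n+1) : Fin (n+2)) : ℕ) ((Fin.last (n+1) : Fin (n+2)) : ℕ) lam = _
    simp [gEnt]
  rw [hentn, hentd, hsub1,
    show ((Amat (n + 2) lam).submatrix (Fin.last (n + 1)).succAbove
      (Fin.last n).castSucc.succAbove) = M' from rfl, hM'det]
  have hs1 : ((Fin.last (n+1) : ℕ) + (((Fin.last n).castSucc : Fin (n+2)) : ℕ)) = 2*n+1 := by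
    simp [Fin.val_last, Fin.coe_castSucc]; ring
  have hs2 : ((Fin.last (n+1) : ℕ) + (Fin.last (n+1) : ℕ)) = 2*(n+1) := by
    simp [Fin.val_last]; ring
  rw [hs1, hs2, pow_mul, pow_succ, pow_mul]
  norm_num
  have hsq : Real.sqrt 2 * Real.sqrt ((n:ℝ)+1) * (Real.sqrt 2 * Real.sqrt ((n:ℝ)+1)) = 2*((n:ℝ)+1) := by
    rw [mul_mul_mul_comm, Real.mul_self_sqrt (by norm_num), Real.mul_self_sqrt (by positivity)]
  linear_combination (Amat n lam).det * hsq

noncomputable def cf (n m : ℕ) : ℝ :=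
  2 ^ (n - m) * (n.choose (2 * m) : ℝ) *
    (((2 * m).factorial : ℝ) / (2 ^ m * (m.factorial : ℝ)))

noncomputable def Sf (n : ℕ) (lam : ℝ) : ℝ :=
  ∑ m ∈ Finset.range (n / 2 + 1), cf n m * lam ^ (n - 2 * m)

lemma cf_rec (n m : ℕ) (hm : m ≤ n) :
    cf (n+2) (m+1) = 2 * cf (n+1) (m+1) + 2 * (n+1) * cf n m := by
  have e1 : n + 2 - (m+1) = (n - m) + 1 := by omega
  have e2 : n + 1 - (m+1) = n - m := by omega
  have hch : (((n+2).choose (2*(m+1)) : ℕ) : ℝ) =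
      ((n+1).choose (2*m+1) : ℝ) + ((n+1).choose (2*m+2) : ℝ) := by
    have : (n+2).choose (2*m+2) = (n+1).choose (2*m+1) + (n+1).choose (2*m+2) :=
      Nat.choose_succ_succ (n+1) (2*m+1)
    rw [show 2*(m+1) = 2*m+2 by ring]
    exact_mod_cast this
  have hkey : ((n:ℝ)+1) * (n.choose (2*m) : ℝ) = ((n+1).choose (2*m+1) : ℝ) * (2*m+1) := by
    exact_mod_cast congrArg (Nat.cast : ℕ → ℝ) (Nat.add_one_mul_choose_eq n (2*m))
  have hfac : (((2*(m+1)).factorial : ℕ) : ℝ) =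
      (2*(m:ℝ)+2) * (2*m+1) * ((2*m).factorial : ℝ) := by
    rw [show 2*(m+1) = (2*m+1)+1 by ring]
    rw [Nat.factorial_succ, Nat.factorial_succ]
    push_cast; ring
  have hmfac : (((m+1).factorial : ℕ) : ℝ) = ((m:ℝ)+1) * (m.factorial : ℝ) := by
    rw [Nat.factorial_succ]; push_cast; ring
  unfold cf
  rw [e1, e2]
  rw [show 2*(m+1) = 2*m+2 by ring] at hch hfac ⊢
  rw [hch, hfac, hmfac]
  have hM : (m.factorial : ℝ) ≠ 0 := by exact_mod_cast m.factorial_pos.ne'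
  field_simp
  linear_combination (-(2:ℝ)^(n-m) * 2^(m+1)) * hkey

lemma cf_zero (n : ℕ) : cf n 0 = 2 ^ n := by
  simp [cf]

lemma cf_eq_zero_of_lt {n m : ℕ} (h : n < 2 * m) : cf n m = 0 := by
  simp [cf, Nat.choose_eq_zero_of_lt h]

lemma Sf_rec (n : ℕ) (lam : ℝ) :
    Sf (n+2) lam = 2 * lam * Sf (n+1) lam + 2 * (n+1) * Sf n lam := by
  have h1 : Sf (n+1) lam = ∑ m ∈ Finset.range (n/2+2), cf (n+1) m * lam ^ (n+1-2*m) := by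
    unfold Sf
    refine Finset.sum_subset (Finset.range_subset_range.2 (by omega)) ?_
    intro m _ hm
    rw [Finset.mem_range, not_lt] at hm
    rw [cf_eq_zero_of_lt (by omega), zero_mul]
  have h2 : Sf (n+2) lam = ∑ m ∈ Finset.range (n/2+2), cf (n+2) m * lam ^ (n+2-2*m) := by
    unfold Sf
    rw [show (n+2)/2 + 1 = n/2+2 by omega]
  rw [h1, h2]
  unfold Sf
  rw [Finset.sum_range_succ' (fun m => cf (n+2) m * lam ^ (n+2-2*m)) (n/2+1),
    Finset.sum_range_succ' (fun m => cf (n+1) m * lam ^ (n+1-2*m)) (n/2+1),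
    mul_add, Finset.mul_sum, Finset.mul_sum, cf_zero, cf_zero]
  rw [add_assoc, add_comm (2*lam*((2:ℝ)^(n+1) * lam ^ (n+1-2*0))), ← add_assoc,
    ← Finset.sum_add_distrib]
  have hterm : ∀ m ∈ Finset.range (n/2+1),
      cf (n+2) (m+1) * lam ^ (n+2-2*(m+1)) =
        2 * lam * (cf (n+1) (m+1) * lam ^ (n+1-2*(m+1))) +
          2 * (n+1) * (cf n m * lam ^ (n-2*m)) := by
    intro m hm
    rw [Finset.mem_range] at hm
    have h2m : 2*m ≤ n := by omega
    rw [cf_rec n m (by omega)]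
    rw [show n+2-2*(m+1) = n-2*m by omega]
    rcases lt_or_eq_of_le h2m with h | h
    · rw [show n-2*m = (n+1-2*(m+1)) + 1 by omega, pow_succ]
      ring
    · rw [show cf (n+1) (m+1) = 0 from cf_eq_zero_of_lt (by omega)]
      ring
  rw [Finset.sum_congr rfl hterm]
  rw [show n+2-2*0 = (n+1-2*0)+1 by omega, pow_succ]
  ring_nf

lemma Amat_det_zero (lam : ℝ) : (Amat 0 lam).det = 1 := Matrix.det_fin_zero

lemma Amat_det_one (lam : ℝ) : (Amat 1 lam).det = 2 * lam := by
  rw [Matrix.det_fin_one]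
  show gEnt 0 0 lam = 2 * lam
  simp [gEnt]

lemma Sf_zero (lam : ℝ) : Sf 0 lam = 1 := by
  simp [Sf, cf]

lemma Sf_one (lam : ℝ) : Sf 1 lam = 2 * lam := by
  simp [Sf, cf]

lemma Amat_det_eq (n : ℕ) (lam : ℝ) : (Amat n lam).det = Sf n lam := by
  induction n using Nat.strong_induction_on with
  | _ n ih =>
    match n with
    | 0 => rw [Amat_det_zero, Sf_zero]
    | 1 => rw [Amat_det_one, Sf_one]
    | (k+2) =>
      rw [Amat_rec, Sf_rec, ih (k+1) (by omega), ih k (by omega)]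

theorem stmt0 (n : ℕ) (B : Matrix (Fin n) (Fin n) ℝ)
    (hB : ∀ j k : Fin n, B j k =
      if (k : ℕ) = (j : ℕ) + 1 then Real.sqrt (2 * ((j : ℕ) + 1))
      else if (j : ℕ) = (k : ℕ) + 1 then -Real.sqrt (2 * ((k : ℕ) + 1))
      else 0)
    (lam : ℝ) :
    (B + (2 * lam) • (1 : Matrix (Fin n) (Fin n) ℝ)).det =
      ∑ m ∈ Finset.range (n / 2 + 1),
        2 ^ (n - m) * (n.choose (2 * m) : ℝ) *
          (((2 * m).factorial : ℝ) / (2 ^ m * (m.factorial : ℝ))) * lam ^ (n - 2 * m) := by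
  have hmat : B + (2 * lam) • (1 : Matrix (Fin n) (Fin n) ℝ) = Amat n lam := by
    ext j k
    rw [Matrix.add_apply, Matrix.smul_apply, Matrix.one_apply, hB]
    show _ = gEnt (j : ℕ) (k : ℕ) lam
    unfold gEnt
    by_cases h1 : (k : ℕ) = (j : ℕ) + 1
    · rw [if_pos h1, if_pos h1, if_neg (by exact fun h => by simp [Fin.ext_iff] at h; omega)]
      simp
    · rw [if_neg h1, if_neg h1]
      by_cases h2 : (j : ℕ) = (k : ℕ) + 1
      · rw [if_pos h2, if_pos h2, if_neg (by exact fun h => by simp [Fin.ext_iff] at h; omega)]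
        simp
      · rw [if_neg h2, if_neg h2]
        by_cases h3 : j = k
        · rw [if_pos h3, if_pos (by simpa [Fin.ext_iff] using h3)]
          simp
        · rw [if_neg h3, if_neg (by simpa [Fin.ext_iff] using h3)]
          simp
  rw [hmat, Amat_det_eq]
  unfold Sf cf
  exact Finset.sum_congr rfl (fun m _ => by ring)
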